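/- The function B(s) = K₀(s/√(1+νs+κ²s²)) / K₁(s/√(1+νs+κ²s²)) satisfies |B(s)| ≤ 1 for every s in the open right half-plane ℂ₀ = {s : Re(s) > 0}, where the square root is the principal branch. -/

import Mathlib

open MeasureTheory Set Filter Topology

/-- Modified Bessel function of the second kind of order `α` (complex argument),
via `K_α(z) = ∫₀^∞ e^{-z cosh t} cosh(α t) dt` (absolutely convergent for `Re z > 0`). -/
noncomputable def cbesselK (α : ℝ) (z : ℂ) : ℂ :=
  ∫ t in Set.Ioi (0 : ℝ), Complex.exp (-z * (Real.cosh t : ℂ)) * (Real.cosh (α * t) : ℂ)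

namespace BesselAux

lemma cosh_lower (t : ℝ) : 1 + t ^ 2 / 2 ≤ Real.cosh t := by
  have h1 := Real.cosh_two_mul (t / 2)
  have h2 := Real.cosh_sq (t / 2)
  have h3 : |t / 2| ≤ |Real.sinh (t / 2)| := by
    rw [Real.abs_sinh]
    rcases eq_or_lt_of_le (abs_nonneg (t / 2)) with h | h
    · simp [← h]
    · exact (Real.self_lt_sinh_iff.mpr h).le
  have h4 : (t / 2) ^ 2 ≤ Real.sinh (t / 2) ^ 2 := by
    have := pow_le_pow_left₀ (abs_nonneg _) h3 2
    simpa [sq_abs] using this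
  have h5 : Real.cosh t = Real.cosh (2 * (t / 2)) := by ring_nf
  nlinarith [h4]

lemma cosh_le_exp' {u : ℝ} (hu : 0 ≤ u) : Real.cosh u ≤ Real.exp u := by
  rw [Real.cosh_eq]
  have := Real.exp_le_exp.mpr (neg_le_self hu)
  linarith

lemma real_bound {x β t : ℝ} (hx : 0 < x) (hβ : 0 ≤ β) (ht : 0 ≤ t) :
    Real.exp (-(x * Real.cosh t)) * Real.cosh (β * t)
      ≤ Real.exp (-x + (β + 1) ^ 2 / (2 * x)) * Real.exp (-t) := by
  have hc := cosh_lower t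
  calc Real.exp (-(x * Real.cosh t)) * Real.cosh (β * t)
      ≤ Real.exp (-(x * Real.cosh t)) * Real.exp (β * t) := by
        exact mul_le_mul_of_nonneg_left (cosh_le_exp' (mul_nonneg hβ ht)) (Real.exp_pos _).le
    _ = Real.exp (-(x * Real.cosh t) + β * t) := by rw [← Real.exp_add]
    _ ≤ Real.exp (-x + (β + 1) ^ 2 / (2 * x)) * Real.exp (-t) := by
        rw [← Real.exp_add, Real.exp_le_exp]
        rw [show -x + (β + 1) ^ 2 / (2 * x) + -t = (-x - t) + (β + 1) ^ 2 / (2 * x) by ring]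
        have hkey : (β + 1) * t ≤ (β + 1) ^ 2 / (2 * x) + x * t ^ 2 / 2 := by
          rw [div_add' _ _ _ (by positivity), le_div_iff₀ (by positivity)]
          nlinarith [sq_nonneg (β + 1 - x * t)]
        nlinarith [mul_le_mul_of_nonneg_left hc hx.le]

lemma cont_aux (x β : ℝ) :
    Continuous fun t => Real.exp (-(x * Real.cosh t)) * Real.cosh (β * t) := by
  fun_prop

lemma integrableOn_real (x β : ℝ) (hx : 0 < x) (hβ : 0 ≤ β) :
    IntegrableOn (fun t => Real.exp (-(x * Real.cosh t)) * Real.cosh (β * t)) (Ioi 0) := by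
  have hbase : IntegrableOn (fun t : ℝ =>
      Real.exp (-x + (β + 1) ^ 2 / (2 * x)) * Real.exp (-t)) (Ioi 0) := by
    have h := (exp_neg_integrableOn_Ioi 0 (one_pos)).const_mul
      (Real.exp (-x + (β + 1) ^ 2 / (2 * x)))
    simp at h; exact h
  refine Integrable.mono hbase ((cont_aux x β).aestronglyMeasurable) ?_
  filter_upwards [ae_restrict_mem measurableSet_Ioi] with t ht
  rw [Real.norm_eq_abs, Real.norm_eq_abs, abs_of_nonneg (by positivity),
    abs_of_nonneg (by positivity)]
  exact real_bound hx hβ (le_of_lt ht)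

lemma integrableOn_complex {z : ℂ} (hz : 0 < z.re) {g : ℝ → ℂ} (hg : Continuous g)
    {M β : ℝ} (hβ : 0 ≤ β) (hgb : ∀ t, ‖g t‖ ≤ M * Real.cosh (β * t)) :
    IntegrableOn (fun t => Complex.exp (-z * (Real.cosh t : ℂ)) * g t) (Ioi 0) := by
  have hM : 0 ≤ M := by
    have := hgb 0
    simp at this
    exact le_trans (norm_nonneg _) this
  have hbase : IntegrableOn (fun t : ℝ =>
      M * (Real.exp (-(z.re * Real.cosh t)) * Real.cosh (β * t))) (Ioi 0) :=
    (integrableOn_real z.re β hz hβ).const_mul M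
  refine Integrable.mono hbase ?_ ?_
  · apply Continuous.aestronglyMeasurable
    fun_prop
  · filter_upwards [ae_restrict_mem measurableSet_Ioi] with t _
    rw [norm_mul, Complex.norm_exp]
    have hre : (-z * (Real.cosh t : ℂ)).re = -(z.re * Real.cosh t) := by
      simp [Complex.mul_re]
    rw [hre, Real.norm_eq_abs, abs_of_nonneg (by positivity)]
    calc Real.exp (-(z.re * Real.cosh t)) * ‖g t‖
        ≤ Real.exp (-(z.re * Real.cosh t)) * (M * Real.cosh (β * t)) :=
          mul_le_mul_of_nonneg_left (hgb t) (Real.exp_pos _).le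
      _ = M * (Real.exp (-(z.re * Real.cosh t)) * Real.cosh (β * t)) := by ring

end BesselAux

namespace BesselAux

lemma norm_exp_mul_cosh {z : ℂ} (t : ℝ) (g : ℂ) :
    ‖Complex.exp (-z * (Real.cosh t : ℂ)) * g‖ = Real.exp (-(z.re * Real.cosh t)) * ‖g‖ := by
  rw [norm_mul, Complex.norm_exp]
  congr 2
  simp [Complex.mul_re]

lemma cosh_mul_cosh_le {t u : ℝ} (ht : 0 ≤ t) (hu : 0 ≤ u) :
    Real.cosh t * Real.cosh u ≤ Real.cosh (t + u) := by
  rw [Real.cosh_add]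
  nlinarith [Real.sinh_nonneg_iff.mpr ht, Real.sinh_nonneg_iff.mpr hu]

lemma hasDerivAt_cbesselK (α : ℝ) (hα : 0 ≤ α) (y : ℝ) {x : ℝ} (hx : 0 < x) :
    HasDerivAt (fun u : ℝ => cbesselK α ((u : ℂ) + (y : ℂ) * Complex.I))
      (-∫ t in Ioi (0 : ℝ), Complex.exp (-((x : ℂ) + (y : ℂ) * Complex.I) * (Real.cosh t : ℂ)) *
        ((Real.cosh t : ℂ) * (Real.cosh (α * t) : ℂ))) x := by
  set F : ℝ → ℝ → ℂ := fun u t =>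
    Complex.exp (-((u : ℂ) + (y : ℂ) * Complex.I) * (Real.cosh t : ℂ)) * (Real.cosh (α * t) : ℂ)
  set F' : ℝ → ℝ → ℂ := fun u t =>
    -(Complex.exp (-((u : ℂ) + (y : ℂ) * Complex.I) * (Real.cosh t : ℂ)) *
      ((Real.cosh t : ℂ) * (Real.cosh (α * t) : ℂ)))
  have hcontF : ∀ u : ℝ, Continuous (F u) := by
    intro u
    apply Continuous.mul
    · exact Complex.continuous_exp.comp (by fun_prop)
    · fun_prop
  have hcontF' : Continuous (F' x) := by
    apply Continuous.neg
    apply Continuous.mul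
    · exact Complex.continuous_exp.comp (by fun_prop)
    · fun_prop
  have hre : ∀ u : ℝ, ((u : ℂ) + (y : ℂ) * Complex.I).re = u := by
    intro u; simp
  have hdiff : ∀ t ∈ Ioi (0:ℝ), ∀ u ∈ Metric.ball x (x / 2),
      HasDerivAt (fun v : ℝ => F v t) (F' u t) u := by
    intro t _ u _
    have h1 : HasDerivAt (fun v : ℝ => ((v : ℂ) + (y : ℂ) * Complex.I)) 1 u := by
      simpa using (Complex.ofRealCLM.hasDerivAt (x := u)).add_const ((y : ℂ) * Complex.I)
    have h2 : HasDerivAt (fun v : ℝ => -((v : ℂ) + (y : ℂ) * Complex.I) * (Real.cosh t : ℂ))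
        (-1 * (Real.cosh t : ℂ)) u := (h1.neg).mul_const _
    have h3 := (h2.cexp).mul_const ((Real.cosh (α * t) : ℂ))
    refine h3.congr_deriv ?_
    simp only [F']
    ring
  have hbound : ∀ t ∈ Ioi (0:ℝ), ∀ u ∈ Metric.ball x (x / 2),
      ‖F' u t‖ ≤ Real.exp (-(x / 2 * Real.cosh t)) * Real.cosh ((α + 1) * t) := by
    intro t ht u hu
    have hu2 : x / 2 ≤ u := by
      rw [Metric.mem_ball, Real.dist_eq, abs_lt] at hu
      linarith
    have h1 : ‖F' u t‖ = Real.exp (-(u * Real.cosh t)) *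
        (Real.cosh t * Real.cosh (α * t)) := by
      rw [norm_neg, norm_exp_mul_cosh, hre]
      congr 1
      rw [← Complex.ofReal_mul, Complex.norm_real, Real.norm_eq_abs,
        abs_of_nonneg (by positivity : (0:ℝ) ≤ Real.cosh t * Real.cosh (α * t))]
    rw [h1]
    have h2 : Real.exp (-(u * Real.cosh t)) ≤ Real.exp (-(x / 2 * Real.cosh t)) := by
      rw [Real.exp_le_exp, neg_le_neg_iff]
      exact mul_le_mul_of_nonneg_right hu2 (Real.cosh_pos t).le
    have h3 : Real.cosh t * Real.cosh (α * t) ≤ Real.cosh ((α + 1) * t) := by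
      have := cosh_mul_cosh_le (le_of_lt ht) (mul_nonneg hα (le_of_lt ht))
      calc Real.cosh t * Real.cosh (α * t) ≤ Real.cosh (t + α * t) := this
        _ = Real.cosh ((α + 1) * t) := by ring_nf
    exact mul_le_mul h2 h3 (by positivity) (Real.exp_pos _).le
  have key := hasDerivAt_integral_of_dominated_loc_of_deriv_le (F := F) (F' := F')
    (x₀ := x) (s := Metric.ball x (x / 2)) (μ := volume.restrict (Ioi 0))
    (bound := fun t => Real.exp (-(x / 2 * Real.cosh t)) * Real.cosh ((α + 1) * t))
    (Metric.ball_mem_nhds x (by positivity))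
    (Eventually.of_forall fun u => (hcontF u).aestronglyMeasurable)
    (by
      have : IntegrableOn (F x) (Ioi 0) := by
        apply integrableOn_complex (M := 1) (by rw [hre]; exact hx) (by fun_prop) hα
        intro t
        rw [Complex.norm_real, Real.norm_eq_abs,
          abs_of_nonneg (Real.cosh_pos (α * t)).le, one_mul]
      exact this)
    hcontF'.aestronglyMeasurable
    (by
      filter_upwards [ae_restrict_mem measurableSet_Ioi] with t ht
      exact hbound t ht)
    (by
      have := integrableOn_real (x / 2) (α + 1) (by positivity) (by positivity)
      exact this)
    (by
      filter_upwards [ae_restrict_mem measurableSet_Ioi] with t ht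
      exact hdiff t ht)
  have h2 := key.2
  have hEq : (fun u : ℝ => cbesselK α ((u : ℂ) + (y : ℂ) * Complex.I)) =
      fun u : ℝ => ∫ t in Ioi (0:ℝ), F u t := rfl
  rw [hEq]
  refine h2.congr_deriv ?_
  rw [← integral_neg]

end BesselAux

namespace BesselAux

lemma sinh_sq_le (t : ℝ) : Real.sinh t ^ 2 ≤ Real.cosh (2 * t) := by
  have h1 := Real.cosh_two_mul t
  have h2 := Real.cosh_sq t
  nlinarith [Real.cosh_pos t]

lemma integrable_exp_sinh_sq {z : ℂ} (hz : 0 < z.re) :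
    IntegrableOn (fun t => Complex.exp (-z * (Real.cosh t : ℂ)) * ((Real.sinh t : ℂ)) ^ 2)
      (Ioi 0) := by
  apply integrableOn_complex (M := 1) (β := 2) hz (by fun_prop) (by norm_num)
  intro t
  rw [← Complex.ofReal_pow, Complex.norm_real, Real.norm_eq_abs,
    abs_of_nonneg (sq_nonneg _), one_mul]
  exact sinh_sq_le t

lemma integrable_exp_cosh {z : ℂ} (hz : 0 < z.re) (α : ℝ) (hα : 0 ≤ α) :
    IntegrableOn (fun t => Complex.exp (-z * (Real.cosh t : ℂ)) * ((Real.cosh (α * t) : ℂ)))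
      (Ioi 0) := by
  apply integrableOn_complex (M := 1) hz (by fun_prop) hα
  intro t
  rw [Complex.norm_real, Real.norm_eq_abs, abs_of_nonneg (Real.cosh_pos (α * t)).le, one_mul]

lemma key_identity {z : ℂ} (hz : 0 < z.re) :
    ∫ t in Ioi (0 : ℝ), Complex.exp (-z * (Real.cosh t : ℂ)) * ((Real.sinh t : ℂ)) ^ 2
      = cbesselK 1 z / z := by
  have hzne : z ≠ 0 := fun h => by simp [h] at hz
  set f : ℝ → ℂ := fun t => Complex.exp (-z * (Real.cosh t : ℂ)) * (Real.sinh t : ℂ)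
  set f' : ℝ → ℂ := fun t =>
    Complex.exp (-z * (Real.cosh t : ℂ)) * (Real.cosh t : ℂ) -
      z * (Complex.exp (-z * (Real.cosh t : ℂ)) * ((Real.sinh t : ℂ)) ^ 2)
  have hderiv : ∀ t ∈ Ici (0:ℝ), HasDerivAt f (f' t) t := by
    intro t _
    have h1 : HasDerivAt (fun t : ℝ => -z * (Real.cosh t : ℂ)) (-z * (Real.sinh t : ℂ)) t :=
      ((Real.hasDerivAt_cosh t).ofReal_comp).const_mul (-z)
    have h2 := h1.cexp
    have h3 : HasDerivAt (fun t : ℝ => ((Real.sinh t : ℂ))) ((Real.cosh t : ℂ)) t :=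
      (Real.hasDerivAt_sinh t).ofReal_comp
    have h4 := h2.mul h3
    refine h4.congr_deriv ?_
    simp only [f']
    ring
  have hic : IntegrableOn (fun t => Complex.exp (-z * (Real.cosh t : ℂ)) * (Real.cosh t : ℂ))
      (Ioi 0) := by
    have := integrable_exp_cosh hz 1 (by norm_num)
    simp only [one_mul] at this
    exact this
  have his : IntegrableOn (fun t => z * (Complex.exp (-z * (Real.cosh t : ℂ)) *
      ((Real.sinh t : ℂ)) ^ 2)) (Ioi 0) := (integrable_exp_sinh_sq hz).const_mul z
  have hint : IntegrableOn f' (Ioi 0) := hic.sub his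
  have htend : Tendsto f atTop (𝓝 0) := by
    apply squeeze_zero_norm' (a := fun t => Real.exp (-z.re + 2 ^ 2 / (2 * z.re)) * Real.exp (-t))
    · filter_upwards [eventually_ge_atTop (0:ℝ)] with t ht
      have h1 : ‖f t‖ = Real.exp (-(z.re * Real.cosh t)) * |Real.sinh t| := by
        rw [norm_exp_mul_cosh, Complex.norm_real, Real.norm_eq_abs]
      rw [h1]
      have h2 : |Real.sinh t| ≤ Real.cosh (1 * t) := by
        rw [one_mul, Real.abs_sinh, ← Real.cosh_abs]
        nlinarith [Real.cosh_sub_sinh |t|, Real.exp_pos (-|t|)]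
      calc Real.exp (-(z.re * Real.cosh t)) * |Real.sinh t|
          ≤ Real.exp (-(z.re * Real.cosh t)) * Real.cosh (1 * t) :=
            mul_le_mul_of_nonneg_left h2 (Real.exp_pos _).le
        _ ≤ Real.exp (-z.re + (1 + 1) ^ 2 / (2 * z.re)) * Real.exp (-t) :=
            real_bound hz (by norm_num) ht
        _ = Real.exp (-z.re + 2 ^ 2 / (2 * z.re)) * Real.exp (-t) := by norm_num
    · rw [show (0:ℝ) = Real.exp (-z.re + 2 ^ 2 / (2 * z.re)) * 0 by ring]
      exact (Real.tendsto_exp_atBot.comp tendsto_neg_atTop_atBot).const_mul _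
  have hzero : (∫ t in Ioi (0:ℝ), f' t) = 0 := by
    have := integral_Ioi_of_hasDerivAt_of_tendsto'
      (f := f) (f' := f') (a := 0) (m := 0) hderiv hint htend
    rw [this]
    simp [f]
  have hsplit : (∫ t in Ioi (0:ℝ), f' t) =
      (∫ t in Ioi (0:ℝ), Complex.exp (-z * (Real.cosh t : ℂ)) * (Real.cosh t : ℂ)) -
        z * ∫ t in Ioi (0:ℝ), Complex.exp (-z * (Real.cosh t : ℂ)) * ((Real.sinh t : ℂ)) ^ 2 := by
    rw [← integral_const_mul, ← integral_sub hic his]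
  have hK1 : cbesselK 1 z =
      ∫ t in Ioi (0:ℝ), Complex.exp (-z * (Real.cosh t : ℂ)) * (Real.cosh t : ℂ) := by
    unfold cbesselK
    congr 1
    ext t
    rw [one_mul]
  rw [eq_div_iff hzne]
  have := hzero
  rw [hsplit] at this
  rw [← hK1] at this
  linear_combination -this

end BesselAux

namespace BesselAux

lemma norm_cbesselK_le {z : ℂ} (α : ℝ) :
    ‖cbesselK α z‖ ≤ ∫ t in Ioi (0:ℝ), Real.exp (-(z.re * Real.cosh t)) * Real.cosh (α * t) := by
  refine le_trans (norm_integral_le_integral_norm _) (le_of_eq ?_)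
  apply integral_congr_ae
  filter_upwards with t
  rw [norm_exp_mul_cosh, Complex.norm_real, Real.norm_eq_abs,
    abs_of_nonneg (Real.cosh_pos _).le]

lemma decay (y α : ℝ) (hα : 0 ≤ α) :
    Tendsto (fun x : ℝ => ‖cbesselK α ((x : ℂ) + (y : ℂ) * Complex.I)‖) atTop (𝓝 0) := by
  set C : ℝ := ∫ t in Ioi (0:ℝ), Real.exp (-(1 * Real.cosh t)) * Real.cosh (α * t)
  have hC : 0 ≤ C := by
    apply integral_nonneg
    intro t
    positivity
  apply squeeze_zero' (Eventually.of_forall fun x => norm_nonneg _)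
    (g := fun x => Real.exp (-(x - 1)) * C)
  · filter_upwards [eventually_ge_atTop (1:ℝ)] with x hx
    have hre : ((x : ℂ) + (y : ℂ) * Complex.I).re = x := by simp
    refine le_trans (norm_cbesselK_le α) ?_
    rw [hre]
    have hmono : (∫ t in Ioi (0:ℝ), Real.exp (-(x * Real.cosh t)) * Real.cosh (α * t))
        ≤ ∫ t in Ioi (0:ℝ), Real.exp (-(x - 1)) *
            (Real.exp (-(1 * Real.cosh t)) * Real.cosh (α * t)) := by
      apply setIntegral_mono_on
      · exact integrableOn_real x α (by linarith) hα
      · exact (integrableOn_real 1 α one_pos hα).const_mul _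
      · exact measurableSet_Ioi
      · intro t ht
        have h1 : Real.exp (-(x * Real.cosh t)) ≤ Real.exp (-(x - 1)) *
            Real.exp (-(1 * Real.cosh t)) := by
          rw [← Real.exp_add, Real.exp_le_exp]
          nlinarith [Real.one_le_cosh t]
        calc Real.exp (-(x * Real.cosh t)) * Real.cosh (α * t)
            ≤ (Real.exp (-(x - 1)) * Real.exp (-(1 * Real.cosh t))) * Real.cosh (α * t) :=
              mul_le_mul_of_nonneg_right h1 (Real.cosh_pos _).le
          _ = Real.exp (-(x - 1)) * (Real.exp (-(1 * Real.cosh t)) * Real.cosh (α * t)) := by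
              ring
    refine hmono.trans (le_of_eq ?_)
    rw [integral_const_mul]
  · rw [show (0:ℝ) = 0 * C by ring]
    apply Tendsto.mul_const
    apply Real.tendsto_exp_atBot.comp
    have : (fun x : ℝ => -(x - 1)) = fun x : ℝ => -x + 1 := by funext x; ring
    rw [this]
    exact tendsto_atBot_add_const_right _ _ tendsto_neg_atTop_atBot

end BesselAux

namespace BesselAux

lemma hasDerivAt_K0 (y : ℝ) {x : ℝ} (hx : 0 < x) :
    HasDerivAt (fun u : ℝ => cbesselK 0 ((u : ℂ) + (y : ℂ) * Complex.I))
      (-cbesselK 1 ((x : ℂ) + (y : ℂ) * Complex.I)) x := by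
  have h := hasDerivAt_cbesselK 0 le_rfl y hx
  convert h using 1
  unfold cbesselK
  rw [neg_inj]
  apply integral_congr_ae
  filter_upwards with t
  norm_num

lemma hasDerivAt_K1 (y : ℝ) {x : ℝ} (hx : 0 < x) :
    HasDerivAt (fun u : ℝ => cbesselK 1 ((u : ℂ) + (y : ℂ) * Complex.I))
      (-(cbesselK 0 ((x : ℂ) + (y : ℂ) * Complex.I) +
          cbesselK 1 ((x : ℂ) + (y : ℂ) * Complex.I) / ((x : ℂ) + (y : ℂ) * Complex.I))) x := by
  have h := hasDerivAt_cbesselK 1 zero_le_one y hx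
  set z : ℂ := (x : ℂ) + (y : ℂ) * Complex.I with hzdef
  have hzre : z.re = x := by simp [hzdef]
  have hz : 0 < z.re := by rw [hzre]; exact hx
  convert h using 1
  rw [neg_inj]
  have h1 : ∀ t : ℝ, Complex.exp (-z * (Real.cosh t : ℂ)) *
      ((Real.cosh t : ℂ) * (Real.cosh (1 * t) : ℂ))
      = Complex.exp (-z * (Real.cosh t : ℂ)) * (Real.cosh (0 * t) : ℂ) +
        Complex.exp (-z * (Real.cosh t : ℂ)) * ((Real.sinh t : ℂ)) ^ 2 := by
    intro t
    have hc : Real.cosh t ^ 2 = Real.sinh t ^ 2 + 1 := Real.cosh_sq t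
    have hc' : (Real.cosh t : ℂ) * (Real.cosh t : ℂ) = (Real.sinh t : ℂ) ^ 2 + 1 := by
      have h' : Real.cosh t * Real.cosh t = Real.sinh t ^ 2 + 1 := by nlinarith
      exact_mod_cast h'
    rw [one_mul, zero_mul, Real.cosh_zero, Complex.ofReal_one]
    calc Complex.exp (-z * (Real.cosh t : ℂ)) * ((Real.cosh t : ℂ) * (Real.cosh t : ℂ))
        = Complex.exp (-z * (Real.cosh t : ℂ)) * ((Real.sinh t : ℂ) ^ 2 + 1) := by rw [hc']
      _ = Complex.exp (-z * (Real.cosh t : ℂ)) * 1 +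
          Complex.exp (-z * (Real.cosh t : ℂ)) * (Real.sinh t : ℂ) ^ 2 := by ring
  have h2 : (∫ t in Ioi (0:ℝ), Complex.exp (-z * (Real.cosh t : ℂ)) *
      ((Real.cosh t : ℂ) * (Real.cosh (1 * t) : ℂ)))
      = (∫ t in Ioi (0:ℝ), Complex.exp (-z * (Real.cosh t : ℂ)) * (Real.cosh (0 * t) : ℂ)) +
        ∫ t in Ioi (0:ℝ), Complex.exp (-z * (Real.cosh t : ℂ)) * ((Real.sinh t : ℂ)) ^ 2 := by
    rw [← integral_add (integrable_exp_cosh hz 0 le_rfl) (integrable_exp_sinh_sq hz)]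
    exact integral_congr_ae (ae_of_all _ h1)
  rw [h2, key_identity hz]
  rfl

/-- The core inequality: `‖K₀(z)‖ ≤ ‖K₁(z)‖` for `Re z > 0`. -/
lemma core {z : ℂ} (hz : 0 < z.re) : ‖cbesselK 0 z‖ ≤ ‖cbesselK 1 z‖ := by
  set y : ℝ := z.im with hy
  set x₀ : ℝ := z.re with hx₀
  have hzeq : (x₀ : ℂ) + (y : ℂ) * Complex.I = z := Complex.re_add_im z
  set g : ℝ → ℝ := fun x => Complex.normSq (cbesselK 1 ((x : ℂ) + (y : ℂ) * Complex.I)) -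
    Complex.normSq (cbesselK 0 ((x : ℂ) + (y : ℂ) * Complex.I)) with hg
  -- derivative of g
  have hgderiv : ∀ x : ℝ, 0 < x → HasDerivAt g
      (-2 * Complex.normSq (cbesselK 1 ((x : ℂ) + (y : ℂ) * Complex.I)) *
        (x / Complex.normSq ((x : ℂ) + (y : ℂ) * Complex.I))) x := by
    intro x hx
    set zx : ℂ := (x : ℂ) + (y : ℂ) * Complex.I with hzx
    have hzxre : zx.re = x := by simp [hzx]
    have hzxim : zx.im = y := by simp [hzx]
    have hzxne : zx ≠ 0 := by
      intro h
      rw [h] at hzxre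
      simp at hzxre
      exact (ne_of_gt hx) hzxre.symm
    have hN : Complex.normSq zx ≠ 0 := by
      simpa [Complex.normSq_eq_zero] using hzxne
    set K0 : ℂ := cbesselK 0 zx with hK0
    set K1 : ℂ := cbesselK 1 zx with hK1
    have hd0 := hasDerivAt_K0 y hx
    have hd1 := hasDerivAt_K1 y hx
    -- real and imaginary parts
    have hre0 : HasDerivAt (fun u : ℝ => (cbesselK 0 ((u : ℂ) + (y : ℂ) * Complex.I)).re)
        ((-K1).re) x := (Complex.reCLM.hasFDerivAt.comp_hasDerivAt x hd0)
    have him0 : HasDerivAt (fun u : ℝ => (cbesselK 0 ((u : ℂ) + (y : ℂ) * Complex.I)).im)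
        ((-K1).im) x := (Complex.imCLM.hasFDerivAt.comp_hasDerivAt x hd0)
    have hre1 : HasDerivAt (fun u : ℝ => (cbesselK 1 ((u : ℂ) + (y : ℂ) * Complex.I)).re)
        ((-(K0 + K1 / zx)).re) x := (Complex.reCLM.hasFDerivAt.comp_hasDerivAt x hd1)
    have him1 : HasDerivAt (fun u : ℝ => (cbesselK 1 ((u : ℂ) + (y : ℂ) * Complex.I)).im)
        ((-(K0 + K1 / zx)).im) x := (Complex.imCLM.hasFDerivAt.comp_hasDerivAt x hd1)
    have hgd := (((hre1.mul hre1).add (him1.mul him1)).sub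
      ((hre0.mul hre0).add (him0.mul him0)))
    have hgeq : g = fun u : ℝ =>
        ((cbesselK 1 ((u : ℂ) + (y : ℂ) * Complex.I)).re *
          (cbesselK 1 ((u : ℂ) + (y : ℂ) * Complex.I)).re +
        (cbesselK 1 ((u : ℂ) + (y : ℂ) * Complex.I)).im *
          (cbesselK 1 ((u : ℂ) + (y : ℂ) * Complex.I)).im) -
        ((cbesselK 0 ((u : ℂ) + (y : ℂ) * Complex.I)).re *
          (cbesselK 0 ((u : ℂ) + (y : ℂ) * Complex.I)).re +
        (cbesselK 0 ((u : ℂ) + (y : ℂ) * Complex.I)).im *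
          (cbesselK 0 ((u : ℂ) + (y : ℂ) * Complex.I)).im) := by
      funext u
      simp only [hg, Complex.normSq_apply]
    rw [hgeq]
    refine hgd.congr_deriv ?_
    have hdivre : (K1 / zx).re = (K1.re * x + K1.im * y) / Complex.normSq zx := by
      rw [Complex.div_re, hzxre, hzxim]
      ring
    have hdivim : (K1 / zx).im = (K1.im * x - K1.re * y) / Complex.normSq zx := by
      rw [Complex.div_im, hzxre, hzxim]
      ring
    simp only [Complex.neg_re, Complex.neg_im, Complex.add_re, Complex.add_im,
      Complex.normSq_apply, hdivre, hdivim]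
    field_simp
    ring
  -- g tends to 0 at infinity
  have hgtend : Tendsto g atTop (𝓝 0) := by
    have h1 : Tendsto (fun x : ℝ =>
        Complex.normSq (cbesselK 1 ((x : ℂ) + (y : ℂ) * Complex.I))) atTop (𝓝 0) := by
      have := ((decay y 1 zero_le_one).mul (decay y 1 zero_le_one))
      rw [mul_zero] at this
      refine this.congr fun x => ?_
      rw [Complex.normSq_eq_norm_sq, pow_two]
    have h0 : Tendsto (fun x : ℝ =>
        Complex.normSq (cbesselK 0 ((x : ℂ) + (y : ℂ) * Complex.I))) atTop (𝓝 0) := by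
      have := ((decay y 0 le_rfl).mul (decay y 0 le_rfl))
      rw [mul_zero] at this
      refine this.congr fun x => ?_
      rw [Complex.normSq_eq_norm_sq, pow_two]
    have := h1.sub h0
    rw [sub_zero] at this
    exact this
  -- g is antitone on [x₀, ∞)
  have hanti : AntitoneOn g (Ici x₀) := by
    apply antitoneOn_of_deriv_nonpos (convex_Ici x₀)
    · intro x hx
      have hx' : 0 < x := lt_of_lt_of_le hz hx
      exact (hgderiv x hx').continuousAt.continuousWithinAt
    · intro x hx
      rw [interior_Ici] at hx
      exact (hgderiv x (lt_trans hz hx)).differentiableAt.differentiableWithinAt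
    · intro x hx
      rw [interior_Ici] at hx
      have hx' : 0 < x := lt_trans hz hx
      rw [(hgderiv x hx').deriv]
      have h1 : 0 ≤ Complex.normSq (cbesselK 1 ((x : ℂ) + (y : ℂ) * Complex.I)) :=
        Complex.normSq_nonneg _
      have h2 : 0 ≤ x / Complex.normSq ((x : ℂ) + (y : ℂ) * Complex.I) :=
        div_nonneg hx'.le (Complex.normSq_nonneg _)
      nlinarith
  -- conclude 0 ≤ g x₀
  have hev : ∀ᶠ x in atTop, g x ≤ g x₀ := by
    filter_upwards [eventually_ge_atTop x₀] with x hx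
    exact hanti self_mem_Ici hx hx
  have h0le : 0 ≤ g x₀ := le_of_tendsto hgtend hev
  rw [hg] at h0le
  simp only [hzeq] at h0le
  have hn0 : ‖cbesselK 0 z‖ ^ 2 ≤ ‖cbesselK 1 z‖ ^ 2 := by
    rw [Complex.sq_norm, Complex.sq_norm]
    linarith
  nlinarith [norm_nonneg (cbesselK 0 z), norm_nonneg (cbesselK 1 z), hn0]

end BesselAux

namespace BesselAux

lemma re_div_sqrt_pos (ν κ : ℝ) (hν : 0 ≤ ν) (hκ : 0 ≤ κ) (s : ℂ) (hs : 0 < s.re) :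
    0 < (s / ((1 + (ν : ℂ) * s + (κ : ℂ) ^ 2 * s ^ 2) ^ (1 / 2 : ℂ))).re := by
  set w : ℂ := 1 + (ν : ℂ) * s + (κ : ℂ) ^ 2 * s ^ 2 with hw
  have him : w.im = s.im * (ν + 2 * κ ^ 2 * s.re) := by
    simp only [hw, Complex.add_im, Complex.mul_im, Complex.one_im, Complex.ofReal_re,
      Complex.ofReal_im, pow_two, Complex.mul_re]
    ring
  have hre : w.re = 1 + ν * s.re + κ ^ 2 * (s.re * s.re - s.im * s.im) := by
    simp only [hw, Complex.add_re, Complex.mul_re, Complex.one_re, Complex.ofReal_re,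
      Complex.ofReal_im, pow_two, Complex.mul_im]
    ring
  have hre_pos_of_im : w.im = 0 → 0 < w.re := by
    intro h0
    rw [him] at h0
    rcases mul_eq_zero.mp h0 with h | h
    · rw [hre, h]
      nlinarith [sq_nonneg κ, mul_nonneg hν hs.le, sq_nonneg (κ * s.re)]
    · have hk2 : κ ^ 2 ≤ 0 := by nlinarith [sq_nonneg κ]
      have hk2' : κ ^ 2 = 0 := le_antisymm hk2 (sq_nonneg κ)
      have hν0 : ν = 0 := by nlinarith [hk2']
      rw [hre, hk2', hν0]
      norm_num
  have hw0 : w ≠ 0 := by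
    intro h
    have h1 : w.im = 0 := by rw [h]; simp
    have h2 := hre_pos_of_im h1
    rw [h] at h2
    simp at h2
  have harg : Complex.arg w ≠ Real.pi := by
    intro hpi
    rw [Complex.arg_eq_pi_iff] at hpi
    obtain ⟨h1, h2⟩ := hpi
    linarith [hre_pos_of_im h2]
  set r : ℂ := w ^ (1 / 2 : ℂ) with hr
  have hr2 : r * r = w := by
    rw [hr, ← Complex.cpow_add _ _ hw0]
    norm_num
  have hrre : 0 < r.re := by
    rw [hr, Complex.cpow_def_of_ne_zero hw0, Complex.exp_re]
    apply mul_pos (Real.exp_pos _)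
    have him2 : (Complex.log w * (1 / 2 : ℂ)).im = Complex.arg w / 2 := by
      simp only [Complex.mul_im, Complex.log_im, Complex.log_re]
      norm_num
      ring
    rw [him2]
    apply Real.cos_pos_of_mem_Ioo
    constructor
    · have := Complex.neg_pi_lt_arg w
      linarith [Real.pi_pos]
    · have h1 := Complex.arg_le_pi w
      have h2 : Complex.arg w < Real.pi := lt_of_le_of_ne h1 harg
      linarith
  have hrne : r ≠ 0 := by
    intro h
    rw [h] at hrre
    simp at hrre
  have himr : w.im = 2 * r.re * r.im := by
    have h := congrArg Complex.im hr2
    rw [Complex.mul_im] at h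
    linarith
  have hkey : 0 ≤ s.im * r.im := by
    have h1 : 0 ≤ s.im * w.im := by
      rw [him]
      nlinarith [sq_nonneg s.im, sq_nonneg κ, mul_nonneg (sq_nonneg κ) hs.le]
    have h2 : r.im = w.im / (2 * r.re) := by
      rw [himr]
      field_simp
    rw [h2]
    rw [mul_div_assoc']
    exact div_nonneg h1 (by linarith)
  have hdivre : (s / r).re = (s.re * r.re + s.im * r.im) / Complex.normSq r := by
    rw [Complex.div_re]
    ring
  rw [hdivre]
  apply div_pos
  · nlinarith [mul_pos hs hrre]
  · exact Complex.normSq_pos.mpr hrne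

end BesselAux

/-- `B(s) = K₀(s/√(1+νs+κ²s²)) / K₁(s/√(1+νs+κ²s²))` satisfies `|B(s)| ≤ 1` on the
open right half-plane; the square root is the principal branch `w ^ (1/2 : ℂ)`. -/
theorem abs_B_le_one (ν κ : ℝ) (hν : 0 ≤ ν) (hκ : 0 ≤ κ) (s : ℂ) (hs : 0 < s.re) :
    ‖(cbesselK 0 (s / ((1 + (ν : ℂ) * s + (κ : ℂ) ^ 2 * s ^ 2) ^ (1 / 2 : ℂ))) /
       cbesselK 1 (s / ((1 + (ν : ℂ) * s + (κ : ℂ) ^ 2 * s ^ 2) ^ (1 / 2 : ℂ))))‖ ≤ 1 := by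
  have hz := BesselAux.re_div_sqrt_pos ν κ hν hκ s hs
  have hcore := BesselAux.core hz
  rw [norm_div]
  exact div_le_one_of_le₀ hcore (norm_nonneg _)
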